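/- Let h, a ∈ ℂ^n with h ≠ 0 and a* not parallel to h. Define e₁ = h/‖h‖ and e₂ = (a* − (e₁^H a*)e₁)/‖a* − (e₁^H a*)e₁‖. For P > 0, γ₀, σ_c² > 0 with γ₀σ_c²/‖h‖² ≤ P, the vector w = x₁e₁ + x₂e₂ with x₁ = √(γ₀σ_c²/‖h‖²)·(e₁^H a*)/|e₁^H a*| and x₂ = √(P − γ₀σ_c²/‖h‖²)·(e₂^H a*)/|e₂^H a*| satisfies ‖w‖² = P, |h^H w|² = γ₀σ_c², and |a^T w|² = (√(γ₀σ_c²)·|h^H a*|/‖h‖² + √((P − γ₀σ_c²/‖h‖²)·(‖a‖² − |h^H a*|²/‖h‖²)))². -/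

import Mathlib

open Matrix

lemma dp_self {n:ℕ} (x : Fin n → ℂ) : star x ⬝ᵥ x = ((∑ i, ‖x i‖^2 : ℝ) : ℂ) := by
  simp only [dotProduct, Pi.star_apply, Complex.star_def, Complex.conj_mul',
    Complex.ofReal_sum]
  exact Finset.sum_congr rfl fun i _ => by push_cast; ring

lemma dp_conj {n:ℕ} (x y : Fin n → ℂ) : star x ⬝ᵥ y = star (star y ⬝ᵥ x) := by
  simp [dotProduct, mul_comm]

theorem stmt11 (n : ℕ) (hn : 0 < n) (h a : Fin n → ℂ) (hh : h ≠ 0)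
    (hnp : ∀ c : ℂ, star a ≠ c • h)
    (P γ₀ σc2 : ℝ) (hP : 0 < P) (hγ₀ : 0 < γ₀) (hσ : 0 < σc2)
    (nh : ℝ) (hnh : nh = Real.sqrt (∑ i, ‖h i‖ ^ 2))
    (e₁ : Fin n → ℂ) (he₁ : e₁ = ((nh⁻¹ : ℝ) : ℂ) • h)
    (v : Fin n → ℂ) (hv : v = star a - (star e₁ ⬝ᵥ star a) • e₁)
    (e₂ : Fin n → ℂ)
    (he₂ : e₂ = (((Real.sqrt (∑ i, ‖v i‖ ^ 2))⁻¹ : ℝ) : ℂ) • v)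
    (hfeas : γ₀ * σc2 / nh ^ 2 ≤ P)
    (hphase : star e₁ ⬝ᵥ star a ≠ 0)
    (x₁ x₂ : ℂ)
    (hx₁ : x₁ = ((Real.sqrt (γ₀ * σc2 / nh ^ 2) : ℝ) : ℂ) *
      ((star e₁ ⬝ᵥ star a) / ((‖star e₁ ⬝ᵥ star a‖ : ℝ) : ℂ)))
    (hx₂ : x₂ = ((Real.sqrt (P - γ₀ * σc2 / nh ^ 2) : ℝ) : ℂ) *
      ((star e₂ ⬝ᵥ star a) / ((‖star e₂ ⬝ᵥ star a‖ : ℝ) : ℂ)))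
    (w : Fin n → ℂ) (hw : w = x₁ • e₁ + x₂ • e₂) :
    (∑ i, ‖w i‖ ^ 2 = P) ∧ (‖star h ⬝ᵥ w‖ ^ 2 = γ₀ * σc2) ∧
    ‖a ⬝ᵥ w‖ ^ 2
      = (Real.sqrt (γ₀ * σc2) * ‖star h ⬝ᵥ star a‖ / nh ^ 2
        + Real.sqrt ((P - γ₀ * σc2 / nh ^ 2) *
            ((∑ i, ‖a i‖ ^ 2) - ‖star h ⬝ᵥ star a‖ ^ 2 / nh ^ 2))) ^ 2 := by
  -- basic positivity
  set Nh : ℝ := ∑ i, ‖h i‖ ^ 2 with hNh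
  have hNhpos : 0 < Nh := by
    obtain ⟨i, hi⟩ : ∃ i, h i ≠ 0 := by
      by_contra hc; push_neg at hc; exact hh (funext hc)
    refine Finset.sum_pos' (fun j _ => by positivity) ⟨i, Finset.mem_univ i, pow_pos (norm_pos_iff.mpr hi) 2⟩
  have hnhpos : 0 < nh := by rw [hnh]; exact Real.sqrt_pos.2 hNhpos
  have hnhsq : nh ^ 2 = Nh := by rw [hnh, Real.sq_sqrt hNhpos.le]
  -- e₁ is unit
  have hhh : star h ⬝ᵥ h = (Nh : ℂ) := dp_self h
  have he11 : star e₁ ⬝ᵥ e₁ = 1 := by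
    rw [he₁, star_smul, smul_dotProduct, dotProduct_smul, hhh]
    simp only [Complex.star_def, Complex.conj_ofReal, smul_eq_mul]
    rw [← Complex.ofReal_mul, ← Complex.ofReal_mul]
    norm_cast
    field_simp
    rw [← hnhsq]
    try ring
  -- z₁
  set z₁ : ℂ := star e₁ ⬝ᵥ star a with hz₁
  have hav : star a = v + z₁ • e₁ := by rw [hv]; abel
  -- e₁ ⟂ v
  have he1v : star e₁ ⬝ᵥ v = 0 := by
    rw [hv, dotProduct_sub, dotProduct_smul, he11, smul_eq_mul, mul_one, ← hz₁, sub_self]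
  -- v ≠ 0
  have hvne : v ≠ 0 := by
    intro hc
    apply hnp (z₁ * ((nh⁻¹ : ℝ) : ℂ))
    have : star a = z₁ • e₁ := by rw [hav, hc, zero_add]
    rw [this, he₁, smul_smul]
  set Nv : ℝ := ∑ i, ‖v i‖ ^ 2 with hNv
  have hNvpos : 0 < Nv := by
    obtain ⟨i, hi⟩ : ∃ i, v i ≠ 0 := by
      by_contra hc; push_neg at hc; exact hvne (funext hc)
    refine Finset.sum_pos' (fun j _ => by positivity) ⟨i, Finset.mem_univ i, pow_pos (norm_pos_iff.mpr hi) 2⟩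
  set sv : ℝ := Real.sqrt Nv with hsv
  have hsvpos : 0 < sv := Real.sqrt_pos.2 hNvpos
  have hsvsq : sv ^ 2 = Nv := Real.sq_sqrt hNvpos.le
  have hvv : star v ⬝ᵥ v = (Nv : ℂ) := dp_self v
  -- orthonormality with e₂
  have he22 : star e₂ ⬝ᵥ e₂ = 1 := by
    rw [he₂, star_smul, smul_dotProduct, dotProduct_smul, hvv]
    simp only [Complex.star_def, Complex.conj_ofReal, smul_eq_mul]
    norm_cast
    field_simp
    rw [← hsvsq]
  have he12 : star e₁ ⬝ᵥ e₂ = 0 := by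
    rw [he₂, dotProduct_smul, he1v, smul_zero]
  have he21 : star e₂ ⬝ᵥ e₁ = 0 := by
    rw [dp_conj, he12, star_zero]
  -- z₂ = sv
  set z₂ : ℂ := star e₂ ⬝ᵥ star a with hz₂
  have hz2val : z₂ = (sv : ℂ) := by
    rw [hz₂, hav, dotProduct_add, dotProduct_smul, he21, smul_zero, add_zero,
      he₂, star_smul, smul_dotProduct, hvv]
    simp only [Complex.star_def, Complex.conj_ofReal, smul_eq_mul]
    norm_cast
    field_simp
    rw [← hsvsq]
  have hz2ne : z₂ ≠ 0 := by rw [hz2val]; exact_mod_cast hsvpos.ne'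
  -- norms of x₁, x₂
  set r₁ : ℝ := Real.sqrt (γ₀ * σc2 / nh ^ 2) with hr₁
  set r₂ : ℝ := Real.sqrt (P - γ₀ * σc2 / nh ^ 2) with hr₂
  have hr₁pos : 0 < r₁ := Real.sqrt_pos.2 (by positivity)
  have hr₂nn : 0 ≤ r₂ := Real.sqrt_nonneg _
  have hr₁sq : r₁ ^ 2 = γ₀ * σc2 / nh ^ 2 := Real.sq_sqrt (by positivity)
  have hr₂sq : r₂ ^ 2 = P - γ₀ * σc2 / nh ^ 2 := Real.sq_sqrt (by linarith)
  have hnx₁ : ‖x₁‖ = r₁ := by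
    rw [hx₁]
    rw [norm_mul, norm_div]
    simp only [Complex.norm_real, Real.norm_eq_abs, abs_norm]
    rw [div_self (norm_ne_zero_iff.2 hphase), mul_one, abs_of_nonneg (Real.sqrt_nonneg _)]
  have hnx₂ : ‖x₂‖ = r₂ := by
    rw [hx₂]
    rw [norm_mul, norm_div]
    simp only [Complex.norm_real, Real.norm_eq_abs, abs_norm]
    rw [div_self (norm_ne_zero_iff.2 hz2ne), mul_one, abs_of_nonneg (Real.sqrt_nonneg _)]
  -- Part 1
  have hsw : star w ⬝ᵥ w = ((‖x₁‖ ^ 2 + ‖x₂‖ ^ 2 : ℝ) : ℂ) := by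
    rw [hw, star_add, star_smul, star_smul, add_dotProduct, smul_dotProduct, smul_dotProduct,
      dotProduct_add, dotProduct_add, dotProduct_smul, dotProduct_smul, dotProduct_smul,
      dotProduct_smul, he11, he12, he21, he22]
    simp only [smul_eq_mul, mul_one, mul_zero, add_zero, zero_add, Complex.star_def,
      Complex.conj_mul']
    push_cast
    ring
  have part1 : ∑ i, ‖w i‖ ^ 2 = P := by
    have h1 : ((∑ i, ‖w i‖ ^ 2 : ℝ) : ℂ) = ((‖x₁‖ ^ 2 + ‖x₂‖ ^ 2 : ℝ) : ℂ) :=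
      (dp_self w).symm.trans hsw
    have h2 : (∑ i, ‖w i‖ ^ 2 : ℝ) = ‖x₁‖ ^ 2 + ‖x₂‖ ^ 2 := by exact_mod_cast h1
    rw [h2, hnx₁, hnx₂, hr₁sq, hr₂sq]; ring
  -- Part 2
  have hheq : h = ((nh : ℝ) : ℂ) • e₁ := by
    rw [he₁, smul_smul, ← Complex.ofReal_mul, mul_inv_cancel₀ hnhpos.ne']
    simp
  have hew : star e₁ ⬝ᵥ w = x₁ := by
    rw [hw, dotProduct_add, dotProduct_smul, dotProduct_smul, he11, he12]
    simp
  have hhw : star h ⬝ᵥ w = ((nh : ℝ) : ℂ) * x₁ := by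
    rw [hheq, star_smul, smul_dotProduct, hew]
    simp [Complex.star_def, Complex.conj_ofReal]
  have part2 : ‖star h ⬝ᵥ w‖ ^ 2 = γ₀ * σc2 := by
    rw [hhw, norm_mul, Complex.norm_real, Real.norm_eq_abs, abs_of_pos hnhpos, hnx₁,
      mul_pow, hr₁sq]
    field_simp
  -- Part 3
  set zh : ℂ := star h ⬝ᵥ star a with hzh
  have hz1h : z₁ = ((nh⁻¹ : ℝ) : ℂ) * zh := by
    rw [hz₁, he₁, star_smul, smul_dotProduct]
    simp [Complex.star_def, Complex.conj_ofReal, smul_eq_mul]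
    left; rfl
  have hnz1 : ‖z₁‖ = ‖zh‖ / nh := by
    rw [hz1h, norm_mul, Complex.norm_real, Real.norm_eq_abs, abs_of_pos (inv_pos.2 hnhpos)]
    field_simp
  -- Nv = Na - ‖z₁‖²
  set Na : ℝ := ∑ i, ‖a i‖ ^ 2 with hNa
  have hNa' : star (star a) ⬝ᵥ star a = (Na : ℂ) := by
    rw [dp_self (star a), hNa]
    norm_cast
    exact Finset.sum_congr rfl fun i _ => by simp
  have hva : star v ⬝ᵥ star a = (Nv : ℂ) := by
    have hve1 : star v ⬝ᵥ e₁ = 0 := by rw [dp_conj, he1v, star_zero]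
    calc star v ⬝ᵥ star a = star v ⬝ᵥ (v + z₁ • e₁) := by rw [← hav]
    _ = star v ⬝ᵥ v + z₁ * (star v ⬝ᵥ e₁) := by
        rw [dotProduct_add, dotProduct_smul, smul_eq_mul]
    _ = (Nv : ℂ) := by rw [hvv, hve1, mul_zero, add_zero]
  have hva2 : star v ⬝ᵥ star a = (Na : ℂ) - ((‖z₁‖ ^ 2 : ℝ) : ℂ) := by
    rw [hv, star_sub, star_smul, sub_dotProduct, smul_dotProduct, hNa', ← hz₁,
      smul_eq_mul]
    rw [Complex.star_def, Complex.conj_mul']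
    push_cast
    ring
  have hNvNa : Nv = Na - ‖z₁‖ ^ 2 := by
    have := hva.symm.trans hva2
    exact_mod_cast this
  -- a ⬝ᵥ w
  have hae1 : star (star a) ⬝ᵥ e₁ = star z₁ := by rw [dp_conj, ← hz₁]
  have hae2 : star (star a) ⬝ᵥ e₂ = star z₂ := by rw [dp_conj, ← hz₂]
  have haw : a ⬝ᵥ w = x₁ * star z₁ + x₂ * star z₂ := by
    have : a ⬝ᵥ w = star (star a) ⬝ᵥ w := by rw [star_star]
    rw [this, hw, dotProduct_add, dotProduct_smul, dotProduct_smul, hae1, hae2,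
      smul_eq_mul, smul_eq_mul]
  have hz1norm_ne : ((‖z₁‖ : ℝ) : ℂ) ≠ 0 := by
    exact_mod_cast (norm_ne_zero_iff.2 hphase)
  have t1 : x₁ * star z₁ = ((r₁ * ‖z₁‖ : ℝ) : ℂ) := by
    rw [hx₁, Complex.star_def, mul_assoc, div_mul_eq_mul_div, Complex.mul_conj']
    push_cast
    rw [pow_two, mul_div_assoc, div_self hz1norm_ne, mul_one]
  have t2 : x₂ * star z₂ = ((r₂ * sv : ℝ) : ℂ) := by
    rw [hx₂, hz2val]
    simp only [Complex.star_def, Complex.conj_ofReal, Complex.norm_real, Real.norm_eq_abs,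
      abs_of_pos hsvpos]
    have hsvne : ((sv : ℝ) : ℂ) ≠ 0 := by exact_mod_cast hsvpos.ne'
    field_simp
    exact (Complex.ofReal_mul _ _).symm
  have hawr : a ⬝ᵥ w = ((r₁ * ‖z₁‖ + r₂ * sv : ℝ) : ℂ) := by
    rw [haw, t1, t2]; push_cast; ring
  have hnaw : ‖a ⬝ᵥ w‖ = r₁ * ‖z₁‖ + r₂ * sv := by
    have h1 : 0 ≤ r₁ * ‖z₁‖ := mul_nonneg hr₁pos.le (norm_nonneg _)
    have h2 : 0 ≤ r₂ * sv := mul_nonneg hr₂nn hsvpos.le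
    rw [hawr, Complex.norm_real, Real.norm_eq_abs, abs_of_nonneg (add_nonneg h1 h2)]
  -- match RHS
  have hterm1 : r₁ * ‖z₁‖ = Real.sqrt (γ₀ * σc2) * ‖zh‖ / nh ^ 2 := by
    have hr1' : r₁ = Real.sqrt (γ₀ * σc2) / nh := by
      rw [hr₁, show γ₀ * σc2 / nh ^ 2 = (Real.sqrt (γ₀ * σc2) / nh) ^ 2 by
        rw [div_pow, Real.sq_sqrt (by positivity)], Real.sqrt_sq (by positivity)]
    rw [hr1', hnz1, div_mul_div_comm, ← pow_two]
  have hterm2 : r₂ * sv = Real.sqrt ((P - γ₀ * σc2 / nh ^ 2) * (Na - ‖zh‖ ^ 2 / nh ^ 2)) := by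
    rw [hr₂, hsv, ← Real.sqrt_mul (by linarith)]
    congr 1
    rw [hNvNa, hnz1, div_pow]
  refine ⟨part1, part2, ?_⟩
  rw [hnaw, hterm1, hterm2]
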